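/- In a Euclidean Hurwitz algebra, if u is a unit vector orthogonal to the unit element 1, then u · u = -1. -/

import Mathlib

theorem stmt_2 {A : Type*} [NormedAddCommGroup A] [InnerProductSpace ℝ A]
    (mul : A →ₗ[ℝ] A →ₗ[ℝ] A) (e : A) (he : ‖e‖ = 1)
    (hul : ∀ x, mul e x = x) (hur : ∀ x, mul x e = x)
    (hmon : ∀ x y, ‖mul x y‖ = ‖x‖ * ‖y‖)
    (u : A) (hu : ‖u‖ = 1) (hue : (inner ℝ u e : ℝ) = 0) :
    mul u u = -e := by
  -- Polarization in the first slot
  have L1 : ∀ a c b : A, (inner ℝ (mul a b) (mul c b) : ℝ) = inner ℝ a c * ‖b‖ ^ 2 := by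
    intro a c b
    have h := hmon (a + c) b
    have h2 : ‖mul (a + c) b‖ ^ 2 = (‖a + c‖ * ‖b‖) ^ 2 := by rw [h]
    have e1 : mul (a + c) b = mul a b + mul c b := by simp [map_add]
    rw [e1, norm_add_sq_real] at h2
    rw [mul_pow, norm_add_sq_real a c, hmon a b, hmon c b] at h2
    linear_combination h2 / 2
  -- Exchange identity
  have L2 : ∀ a c b d : A,
      (inner ℝ (mul a b) (mul c d) : ℝ) + inner ℝ (mul a d) (mul c b)
        = 2 * inner ℝ a c * inner ℝ b d := by
    intro a c b d
    have h := L1 a c (b + d)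
    have e1 : mul a (b + d) = mul a b + mul a d := by simp
    have e2 : mul c (b + d) = mul c b + mul c d := by simp
    rw [e1, e2, norm_add_sq_real] at h
    simp only [inner_add_left, inner_add_right] at h
    have h1 := L1 a c b
    have h2 := L1 a c d
    have hsym : (inner ℝ (mul a d) (mul c b) : ℝ) = inner ℝ (mul c b) (mul a d) :=
      real_inner_comm _ _
    nlinarith [h, h1, h2, hsym]
  have key : (inner ℝ (mul u u) e : ℝ) = -1 := by
    have h := L2 u e u e
    simp only [hul, hur] at h
    have : (inner ℝ u u : ℝ) = 1 := by
      rw [real_inner_self_eq_norm_sq, hu]; norm_num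
    nlinarith [h, this, real_inner_comm e u, hue]
  have hn : ‖mul u u‖ = 1 := by rw [hmon, hu]; norm_num
  have hz : ‖mul u u + e‖ ^ 2 = 0 := by
    rw [norm_add_sq_real, hn, he, key]; ring
  have : mul u u + e = 0 := by
    have := sq_eq_zero_iff.mp hz
    exact norm_eq_zero.mp this
  exact eq_neg_of_add_eq_zero_left this
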